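/- Let 0 < u ≤ 1 and v > 0 and d ≥ 1. There exists a constant C > 0 such that for all y, y' > 0: (y/(y+y'))·(y+y')^{2u} − y^{2u}·(y/(y+y'))^{vd/2} ≤ C·[(y y')^u·(y/(y+y'))^{vd/2} + (y y')^u·(y'/(y+y'))^{vd/2}]. -/

import Mathlib

open Real

lemma key_ineq (u α : ℝ) (hu0 : 0 < u) (hu1 : u ≤ 1) (hα : 0 < α)
    (t : ℝ) (ht0 : 0 < t) (ht1 : t < 1) :
    t - t ^ (2*u+α) ≤ (2*u+α) * 2^α *
      ((t*(1-t)) ^ u * t ^ α + (t*(1-t)) ^ u * (1-t) ^ α) := by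
  have h1t : 0 < 1 - t := by linarith
  set β := 2*u + α with hβ
  have hβ0 : 0 < β := by positivity
  have step1 : t - t ^ β ≤ β * (t * (1-t)) := by
    rcases le_or_gt β 1 with h | h
    · have : t ^ (1:ℝ) ≤ t ^ β := Real.rpow_le_rpow_of_exponent_ge ht0 ht1.le h
      rw [Real.rpow_one] at this
      nlinarith [mul_pos ht0 h1t]
    · have hc : t - t ^ β = t * (1 - t ^ (β - 1)) := by
        have hadd := Real.rpow_add ht0 1 (β-1)
        rw [Real.rpow_one] at hadd
        rw [mul_sub, mul_one, ← hadd]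
        ring_nf
      rw [hc]
      rcases le_or_gt (β - 1) 1 with h2 | h2
      · have h3 : t ^ (1:ℝ) ≤ t ^ (β-1) := Real.rpow_le_rpow_of_exponent_ge ht0 ht1.le h2
        rw [Real.rpow_one] at h3
        have h4 : t * (1 - t ^ (β-1)) ≤ t * (1 - t) :=
          mul_le_mul_of_nonneg_left (by linarith) ht0.le
        nlinarith [mul_pos ht0 h1t]
      · have hb : 1 + (β-1) * (t-1) ≤ (1 + (t-1)) ^ (β-1) :=
          one_add_mul_self_le_rpow_one_add (by linarith) h2.le
        have he : 1 + (t-1) = t := by ring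
        rw [he] at hb
        nlinarith [mul_pos ht0 h1t]
  have hx0 : 0 < t * (1-t) := mul_pos ht0 h1t
  have hx1 : t * (1-t) ≤ 1 := by nlinarith
  have step2 : t * (1-t) ≤ (t*(1-t)) ^ u := by
    have := Real.rpow_le_rpow_of_exponent_ge hx0 hx1 hu1
    rwa [Real.rpow_one] at this
  have step3 : ((1:ℝ)/2) ^ α ≤ t ^ α + (1-t) ^ α := by
    rcases le_total ((1:ℝ)/2) t with h | h
    · have : ((1:ℝ)/2) ^ α ≤ t ^ α := Real.rpow_le_rpow (by norm_num) h hα.le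
      have h2 : 0 ≤ (1-t) ^ α := Real.rpow_nonneg h1t.le _
      linarith
    · have : ((1:ℝ)/2) ^ α ≤ (1-t) ^ α := Real.rpow_le_rpow (by norm_num) (by linarith) hα.le
      have h2 : 0 ≤ t ^ α := Real.rpow_nonneg ht0.le _
      linarith
  have h2α : (0:ℝ) < 2 ^ α := Real.rpow_pos_of_pos (by norm_num) α
  have hhalf : ((1:ℝ)/2) ^ α = (2 ^ α)⁻¹ := by
    rw [div_rpow (by norm_num) (by norm_num), Real.one_rpow, inv_eq_one_div]
  have hxu : 0 < (t*(1-t)) ^ u := Real.rpow_pos_of_pos hx0 _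
  calc t - t ^ β ≤ β * (t * (1-t)) := step1
    _ ≤ β * (t*(1-t)) ^ u := mul_le_mul_of_nonneg_left step2 hβ0.le
    _ = β * 2^α * ((t*(1-t)) ^ u * (2^α)⁻¹) := by
        field_simp
    _ ≤ β * 2^α * ((t*(1-t)) ^ u * (t^α + (1-t)^α)) := by
        apply mul_le_mul_of_nonneg_left _ (by positivity)
        apply mul_le_mul_of_nonneg_left _ hxu.le
        rw [← hhalf]; exact step3
    _ = β * 2^α * ((t*(1-t)) ^ u * t ^ α + (t*(1-t)) ^ u * (1-t) ^ α) := by ring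

/-- For `0 < u ≤ 1`, `v > 0`, `d ≥ 1`, there is `C > 0` such that for all `y, y' > 0`:
`(y/(y+y'))(y+y')^{2u} − y^{2u}(y/(y+y'))^{vd/2}
  ≤ C[(yy')^u (y/(y+y'))^{vd/2} + (yy')^u (y'/(y+y'))^{vd/2}]`. -/
theorem stmt4 (u v : ℝ) (hu0 : 0 < u) (hu1 : u ≤ 1) (hv : 0 < v) (d : ℕ) (hd : 1 ≤ d) :
    ∃ C > (0:ℝ), ∀ y y' : ℝ, 0 < y → 0 < y' →
      (y / (y + y')) * (y + y') ^ (2*u) - y ^ (2*u) * (y / (y + y')) ^ (v * d / 2)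
        ≤ C * ((y * y') ^ u * (y / (y + y')) ^ (v * d / 2)
              + (y * y') ^ u * (y' / (y + y')) ^ (v * d / 2)) := by
  set α := v * d / 2 with hαdef
  have hα : 0 < α := by
    have : (0:ℝ) < d := by exact_mod_cast Nat.lt_of_lt_of_le Nat.zero_lt_one hd
    positivity
  refine ⟨(2*u+α) * 2^α, by positivity, fun y y' hy hy' => ?_⟩
  have hs : 0 < y + y' := by linarith
  set s := y + y' with hsdef
  set t := y / s with htdef
  have ht0 : 0 < t := div_pos hy hs
  have ht1 : t < 1 := by
    rw [htdef, div_lt_one hs]; linarith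
  have hts : t * s = y := div_mul_cancel₀ y hs.ne'
  have h1tp : 0 < 1 - t := by linarith
  have h1t : 1 - t = y' / s := by
    rw [htdef]
    field_simp
    rw [hsdef]; ring
  have h1ts : (1-t) * s = y' := by rw [h1t]; field_simp
  have key := key_ineq u α hu0 hu1 hα t ht0 ht1
  have hs2u : 0 < s ^ (2*u) := Real.rpow_pos_of_pos hs _
  have hmul := mul_le_mul_of_nonneg_right key hs2u.le
  have e1 : y ^ (2*u) = t ^ (2*u) * s ^ (2*u) := by
    rw [← hts, Real.mul_rpow ht0.le hs.le]
  have e2 : t ^ (2*u) * t ^ α = t ^ (2*u+α) := (Real.rpow_add ht0 _ _).symm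
  have e3 : (y * y') ^ u = (t*(1-t)) ^ u * s ^ (2*u) := by
    have h2u : s ^ (2*u) = s ^ u * s ^ u := by rw [two_mul, Real.rpow_add hs]
    rw [h2u, ← Real.mul_rpow hs.le hs.le,
      ← Real.mul_rpow (mul_nonneg ht0.le h1tp.le) (mul_nonneg hs.le hs.le)]
    congr 1
    rw [← hts, ← h1ts]; ring
  calc (y / s) * s ^ (2*u) - y ^ (2*u) * (y/s) ^ α
      = (t - t ^ (2*u+α)) * s ^ (2*u) := by
        rw [e1, ← htdef, ← e2]; ring
    _ ≤ (2*u+α) * 2^α * ((t*(1-t)) ^ u * t ^ α + (t*(1-t)) ^ u * (1-t) ^ α) * s ^ (2*u) := hmul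
    _ = (2*u+α) * 2^α * ((y*y') ^ u * (y/s) ^ α + (y*y') ^ u * (y'/s) ^ α) := by
        rw [e3, ← htdef, ← h1t]; ring
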